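/- Let K be an algebraically closed field, Λ a finite-dimensional K-algebra, and U a torsion class in mod(Λ). Then lim U is closed under pure submodules, and lim U is closed under arbitrary direct products if and only if U = gen(N) for some finite-dimensional Λ-module N. -/

import Mathlib

universe u

open scoped DirectSum

/-- A module `M` over `Λ` is indecomposable if it is nonzero and any direct sum
decomposition of `M` has a zero summand. -/
def IsIndecomposableModule (Λ : Type u) [Ring Λ] (M : ModuleCat.{u} Λ) : Prop :=
  (∃ x : M, x ≠ 0) ∧
    ∀ M₁ M₂ : ModuleCat.{u} Λ,
      Nonempty ((M : Type u) ≃ₗ[Λ] Prod (M₁ : Type u) (M₂ : Type u)) →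
        (∀ x : M₁, x = 0) ∨ (∀ x : M₂, x = 0)

/-- A `Λ`-module is finite-dimensional if it is finite-dimensional as a `K`-vector space
(via restriction of scalars along `K → Λ`). -/
def IsFinDimModule (K Λ : Type u) [Field K] [Ring Λ] [Algebra K Λ]
    (M : ModuleCat.{u} Λ) : Prop :=
  @FiniteDimensional K (RestrictScalars K Λ M) _ _ (RestrictScalars.module K Λ M)

/-- A torsion class in `Mod Λ`: a class of modules closed under isomorphisms, arbitrary
direct sums, quotients and extensions. -/
def IsTorsionClass (Λ : Type u) [Ring Λ] (T : Set (ModuleCat.{u} Λ)) : Prop :=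
  (∀ M N : ModuleCat.{u} Λ, Nonempty ((M : Type u) ≃ₗ[Λ] (N : Type u)) → M ∈ T → N ∈ T) ∧
  (∀ (ι : Type u) (F : ι → ModuleCat.{u} Λ), (∀ i, F i ∈ T) →
      ModuleCat.of Λ (⨁ i, (F i : Type u)) ∈ T) ∧
  (∀ M N : ModuleCat.{u} Λ, M ∈ T →
      (∃ p : (M : Type u) →ₗ[Λ] (N : Type u), Function.Surjective p) → N ∈ T) ∧
  (∀ A B C : ModuleCat.{u} Λ, A ∈ T → C ∈ T →
      (∃ (f : (A : Type u) →ₗ[Λ] (B : Type u)) (g : (B : Type u) →ₗ[Λ] (C : Type u)),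
        Function.Injective f ∧ Function.Surjective g ∧ LinearMap.range f = LinearMap.ker g) →
      B ∈ T)

/-- A torsion class in `mod Λ` (finite-dimensional modules): a class of finite-dimensional
modules closed under isomorphisms, finite direct sums, quotients and extensions. -/
def IsSmallTorsionClass (K Λ : Type u) [Field K] [Ring Λ] [Algebra K Λ]
    (U : Set (ModuleCat.{u} Λ)) : Prop :=
  (∀ M ∈ U, IsFinDimModule K Λ M) ∧
  (∀ M N : ModuleCat.{u} Λ, Nonempty ((M : Type u) ≃ₗ[Λ] (N : Type u)) → M ∈ U → N ∈ U) ∧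
  (∀ (n : ℕ) (F : Fin n → ModuleCat.{u} Λ), (∀ i, F i ∈ U) →
      ModuleCat.of Λ (⨁ i, (F i : Type u)) ∈ U) ∧
  (∀ M N : ModuleCat.{u} Λ, M ∈ U →
      (∃ p : (M : Type u) →ₗ[Λ] (N : Type u), Function.Surjective p) → N ∈ U) ∧
  (∀ A B C : ModuleCat.{u} Λ, A ∈ U → C ∈ U →
      (∃ (f : (A : Type u) →ₗ[Λ] (B : Type u)) (g : (B : Type u) →ₗ[Λ] (C : Type u)),
        Function.Injective f ∧ Function.Surjective g ∧ LinearMap.range f = LinearMap.ker g) →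
      B ∈ U)

/-- A torsion pair in `Mod Λ`. -/
def IsTorsionPair (Λ : Type u) [Ring Λ] (T F : Set (ModuleCat.{u} Λ)) : Prop :=
  (∀ A ∈ T, ∀ B ∈ F, ∀ φ : (A : Type u) →ₗ[Λ] (B : Type u), φ = 0) ∧
  (∀ X : ModuleCat.{u} Λ,
    ∃ (A B : ModuleCat.{u} Λ) (i : (A : Type u) →ₗ[Λ] (X : Type u))
      (p : (X : Type u) →ₗ[Λ] (B : Type u)),
      A ∈ T ∧ B ∈ F ∧ Function.Injective i ∧ Function.Surjective p ∧
        LinearMap.range i = LinearMap.ker p)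

/-- A torsion pair in `mod Λ` (finite-dimensional modules). -/
def IsSmallTorsionPair (K Λ : Type u) [Field K] [Ring Λ] [Algebra K Λ]
    (U V : Set (ModuleCat.{u} Λ)) : Prop :=
  (∀ M ∈ U, IsFinDimModule K Λ M) ∧ (∀ M ∈ V, IsFinDimModule K Λ M) ∧
  (∀ A ∈ U, ∀ B ∈ V, ∀ φ : (A : Type u) →ₗ[Λ] (B : Type u), φ = 0) ∧
  (∀ X : ModuleCat.{u} Λ, IsFinDimModule K Λ X →
    ∃ (A B : ModuleCat.{u} Λ) (i : (A : Type u) →ₗ[Λ] (X : Type u))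
      (p : (X : Type u) →ₗ[Λ] (B : Type u)),
      A ∈ U ∧ B ∈ V ∧ Function.Injective i ∧ Function.Surjective p ∧
        LinearMap.range i = LinearMap.ker p)

/-- `Gen M`: the class of modules which are quotients of (possibly infinite) direct sums
of copies of `M`. -/
def GenClass (Λ : Type u) [Ring Λ] (M : ModuleCat.{u} Λ) : Set (ModuleCat.{u} Λ) :=
  {X | ∃ (ι : Type u) (p : (ι →₀ (M : Type u)) →ₗ[Λ] (X : Type u)), Function.Surjective p}

/-- `Gen U` for a class `U`: quotients of direct sums of modules in `U`. -/
def GenClassOfSet (Λ : Type u) [Ring Λ] (U : Set (ModuleCat.{u} Λ)) :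
    Set (ModuleCat.{u} Λ) :=
  {X | ∃ (ι : Type u) (F : ι → ModuleCat.{u} Λ)
        (p : (⨁ i, (F i : Type u)) →ₗ[Λ] (X : Type u)),
        (∀ i, F i ∈ U) ∧ Function.Surjective p}

/-- `gen M`: the class of finite-dimensional modules which are quotients of finite direct
sums of copies of `M`. -/
def SmallGenClass (K Λ : Type u) [Field K] [Ring Λ] [Algebra K Λ]
    (M : ModuleCat.{u} Λ) : Set (ModuleCat.{u} Λ) :=
  {X | IsFinDimModule K Λ X ∧
        ∃ (n : ℕ) (p : (Fin n → (M : Type u)) →ₗ[Λ] (X : Type u)), Function.Surjective p}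

/-- `U^⊥`: the class of modules receiving no nonzero map from members of `U`. -/
def PerpClass (Λ : Type u) [Ring Λ] (U : Set (ModuleCat.{u} Λ)) : Set (ModuleCat.{u} Λ) :=
  {Y | ∀ A ∈ U, ∀ φ : (A : Type u) →ₗ[Λ] (Y : Type u), φ = 0}

/-- `lim U`: the class of modules which are direct limits (filtered colimits) of directed
systems of modules in `U`. -/
def LimClass (Λ : Type u) [Ring Λ] (U : Set (ModuleCat.{u} Λ)) : Set (ModuleCat.{u} Λ) :=
  {X | ∃ (ι : Type u) (r : ι → ι → Prop),
    Nonempty ι ∧ (∀ i, r i i) ∧ (∀ i j k, r i j → r j k → r i k) ∧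
    (∀ i j, ∃ k, r i k ∧ r j k) ∧
    ∃ (F : ι → ModuleCat.{u} Λ)
      (f : ∀ i j, r i j → ((F i : Type u) →ₗ[Λ] (F j : Type u)))
      (g : ∀ i, (F i : Type u) →ₗ[Λ] (X : Type u)),
      (∀ i, F i ∈ U) ∧
      (∀ i (h : r i i), f i i h = LinearMap.id) ∧
      (∀ i j k (hij : r i j) (hjk : r j k) (hik : r i k),
          (f j k hjk).comp (f i j hij) = f i k hik) ∧
      (∀ i j (h : r i j), (g j).comp (f i j h) = g i) ∧
      (∀ x : X, ∃ i y, g i y = x) ∧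
      (∀ i (y : F i), g i y = 0 → ∃ (j : ι) (h : r i j), f i j h y = 0)}

/-- Purity of a submodule, via the standard characterisation by finite systems of linear
equations (equivalent to injectivity of `Z ⊗ Y → Z ⊗ X` for all right modules `Z`). -/
def IsPureSubmodule (Λ : Type u) [Ring Λ] {X : Type u} [AddCommGroup X] [Module Λ X]
    (Y : Submodule Λ X) : Prop :=
  ∀ (m n : ℕ) (a : Fin m → Fin n → Λ) (y : Fin m → Y),
    (∃ x : Fin n → X, ∀ i, ∑ j, a i j • x j = (y i : X)) →
    ∃ x' : Fin n → Y, ∀ i, ∑ j, a i j • (x' j : X) = (y i : X)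


instance rsModuleInst {K Λ M : Type u} [Field K] [Ring Λ] [Algebra K Λ] [AddCommGroup M]
    [Module Λ M] : @Module K (RestrictScalars K Λ M) _ AddCommGroup.toAddCommMonoid :=
  RestrictScalars.module K Λ M

section helpers
variable {K Λ : Type u} [Field K] [Ring Λ] [Algebra K Λ]

/-- linear combination map -/
def combo {M : Type u} [AddCommGroup M] [Module Λ M] {n : ℕ} (s : Fin n → M) :
    (Fin n → Λ) →ₗ[Λ] M where
  toFun v := ∑ j, v j • s j
  map_add' u v := by simp [add_smul, Finset.sum_add_distrib]
  map_smul' a v := by simp [mul_smul, Finset.smul_sum]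

@[simp] lemma combo_apply {M : Type u} [AddCommGroup M] [Module Λ M] {n : ℕ}
    (s : Fin n → M) (v : Fin n → Λ) : combo s v = ∑ j, v j • s j := rfl

/-- H1: a module fin-dim over K via restriction has a finite family with K-coefficient
spanning property (coefficients through algebraMap). -/
lemma exists_kspan (M : Type u) [AddCommGroup M] [Module Λ M]
    (h : FiniteDimensional K (RestrictScalars K Λ M)) :
    ∃ (n : ℕ) (w : Fin n → M), ∀ x : M, ∃ c : Fin n → K,
      x = ∑ l, algebraMap K Λ (c l) • w l := by
  obtain ⟨n, s, hs⟩ := @Module.Finite.exists_fin K (RestrictScalars K Λ M) _ _ _ h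
  refine ⟨n, fun l => RestrictScalars.addEquiv K Λ M (s l), fun x => ?_⟩
  have hx : (RestrictScalars.addEquiv K Λ M).symm x ∈ Submodule.span K (Set.range s) := by
    exact (Submodule.eq_top_iff'.1 hs) _
  obtain ⟨c, hc⟩ := (Submodule.mem_span_range_iff_exists_fun K).1 hx
  refine ⟨c, ?_⟩
  have := congrArg (RestrictScalars.addEquiv K Λ M) hc
  rw [AddEquiv.apply_symm_apply] at this
  rw [← this, map_sum]
  refine Finset.sum_congr rfl fun l _ => ?_
  rw [RestrictScalars.smul_def]
  simp

end helpers

section helpers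
variable {K Λ : Type u} [Field K] [Ring Λ] [Algebra K Λ]

/-- transfer fin-dim along a surjective Λ-linear map -/
lemma findim_of_surjective {M N : Type u} [AddCommGroup M] [Module Λ M]
    [AddCommGroup N] [Module Λ N] (f : M →ₗ[Λ] N) (hf : Function.Surjective f)
    (h : FiniteDimensional K (RestrictScalars K Λ M)) :
    FiniteDimensional K (RestrictScalars K Λ N) := by
  let f' : RestrictScalars K Λ M →ₗ[K] RestrictScalars K Λ N :=
    { toFun := fun x => (RestrictScalars.addEquiv K Λ N).symm
        (f (RestrictScalars.addEquiv K Λ M x))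
      map_add' := by intros; simp
      map_smul' := by
        intro c x
        rw [RestrictScalars.smul_def, RestrictScalars.smul_def]
        simp }
  have hf' : Function.Surjective f' := by
    intro y
    obtain ⟨x, hx⟩ := hf (RestrictScalars.addEquiv K Λ N y)
    exact ⟨(RestrictScalars.addEquiv K Λ M).symm x, by simp [f', hx]⟩
  haveI : Module.Finite K (RestrictScalars K Λ M) := h
  exact Module.Finite.of_surjective f' hf'

/-- transfer fin-dim along an injective Λ-linear map -/
lemma findim_of_injective {M N : Type u} [AddCommGroup M] [Module Λ M]
    [AddCommGroup N] [Module Λ N] (f : M →ₗ[Λ] N) (hf : Function.Injective f)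
    (h : FiniteDimensional K (RestrictScalars K Λ N)) :
    FiniteDimensional K (RestrictScalars K Λ M) := by
  let f' : RestrictScalars K Λ M →ₗ[K] RestrictScalars K Λ N :=
    { toFun := fun x => (RestrictScalars.addEquiv K Λ N).symm
        (f (RestrictScalars.addEquiv K Λ M x))
      map_add' := by intros; simp
      map_smul' := by
        intro c x
        rw [RestrictScalars.smul_def, RestrictScalars.smul_def]
        simp }
  have hf' : Function.Injective f' := by
    intro x y hxy
    simp only [f', LinearMap.coe_mk, AddHom.coe_mk, EmbeddingLike.apply_eq_iff_eq] at hxy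
    exact (RestrictScalars.addEquiv K Λ M).injective (hf hxy)
  exact FiniteDimensional.of_injective f' hf'

/-- fin dim of Λ itself -/
lemma findim_lambda [FiniteDimensional K Λ] :
    FiniteDimensional K (RestrictScalars K Λ Λ) := by
  let f' : RestrictScalars K Λ Λ →ₗ[K] Λ :=
    { toFun := fun x => RestrictScalars.addEquiv K Λ Λ x
      map_add' := by intros; simp
      map_smul' := by
        intro c x
        rw [RestrictScalars.smul_def]
        simp [Algebra.smul_def] }
  exact FiniteDimensional.of_injective f' (RestrictScalars.addEquiv K Λ Λ).injective

/-- fin dim of finite pi powers -/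
lemma findim_pi {n : ℕ} {M : Type u} [AddCommGroup M] [Module Λ M]
    (h : FiniteDimensional K (RestrictScalars K Λ M)) :
    FiniteDimensional K (RestrictScalars K Λ (Fin n → M)) := by
  let f' : RestrictScalars K Λ (Fin n → M) →ₗ[K] (Fin n → RestrictScalars K Λ M) :=
    { toFun := fun x j => (RestrictScalars.addEquiv K Λ M).symm
        ((RestrictScalars.addEquiv K Λ (Fin n → M) x) j)
      map_add' := by intros; funext j; simp
      map_smul' := by
        intro c x
        funext j
        rw [RestrictScalars.smul_def]
        simp only [Pi.smul_apply, RingHom.id_apply]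
        rw [RestrictScalars.smul_def]
        simp }
  have : Function.Injective f' := by
    intro x y hxy
    apply (RestrictScalars.addEquiv K Λ (Fin n → M)).injective
    funext j
    have := congrFun hxy j
    simpa using (RestrictScalars.addEquiv K Λ M).symm.injective this
  exact FiniteDimensional.of_injective f' this

end helpers

section helpers2
variable {K Λ : Type u} [Field K] [Ring Λ] [Algebra K Λ]

lemma coe_sum_smul {M : Type u} [AddCommGroup M] [Module Λ M] (P : Submodule Λ M)
    {n : ℕ} (v : Fin n → Λ) (u : Fin n → ↥P) :
    ((∑ j, v j • u j : ↥P) : M) = ∑ j, v j • (u j : M) := by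
  rw [show ((∑ j, v j • u j : ↥P) : M) = P.subtype (∑ j, v j • u j) from rfl, map_sum]
  rfl

lemma combo_coe {M : Type u} [AddCommGroup M] [Module Λ M] (P : Submodule Λ M)
    {n : ℕ} (u : Fin n → ↥P) (v : Fin n → Λ) :
    ((combo u v : ↥P) : M) = ∑ j, v j • (u j : M) := by
  rw [combo_apply]; exact coe_sum_smul P v u

end helpers2

section limchar
variable {K Λ : Type u} [Field K] [Ring Λ] [Algebra K Λ]

lemma limclass_iff (U : Set (ModuleCat.{u} Λ)) (hU : IsSmallTorsionClass K Λ U)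
    (X : ModuleCat.{u} Λ) :
    X ∈ LimClass Λ U ↔
      ∀ x : X, ∃ S : Submodule Λ (X : Type u), x ∈ S ∧ ModuleCat.of Λ ↥S ∈ U := by
  constructor
  · rintro ⟨ι, r, -, -, -, -, F, f, g, hFU, -, -, -, hsurj, -⟩ x
    obtain ⟨i, y, hy⟩ := hsurj x
    refine ⟨LinearMap.range (g i), ⟨y, hy⟩, ?_⟩
    exact hU.2.2.2.1 (F i) _ (hFU i)
      ⟨(g i).rangeRestrict, LinearMap.surjective_rangeRestrict _⟩
  · intro h
    -- index: all U-submodules of X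
    refine ⟨{S : Submodule Λ (X : Type u) // ModuleCat.of Λ ↥S ∈ U},
      fun S T => S.1 ≤ T.1, ?_, fun S => le_refl _, fun _ _ _ => le_trans,
      ?_, fun S => ModuleCat.of Λ ↥S.1,
      fun S T hST => Submodule.inclusion hST,
      fun S => S.1.subtype, fun S => S.2, ?_, ?_, ?_, ?_, ?_⟩
    · obtain ⟨S, -, hS⟩ := h 0
      exact ⟨⟨S, hS⟩⟩
    · -- directedness via sup
      rintro ⟨S, hS⟩ ⟨T, hT⟩
      refine ⟨⟨S ⊔ T, ?_⟩, le_sup_left, le_sup_right⟩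
      -- surjective map from the direct sum of S and T
      have h2 := hU.2.2.1 2 ![ModuleCat.of Λ ↥S, ModuleCat.of Λ ↥T]
        (by intro i; fin_cases i <;> assumption)
      refine hU.2.2.2.1 _ _ h2 ?_
      classical
      let comps : ∀ i : Fin 2,
          ((![ModuleCat.of Λ ↥S, ModuleCat.of Λ ↥T] i : Type u) →ₗ[Λ] ↥(S ⊔ T)) :=
        Fin.cases (Submodule.inclusion (le_sup_left : S ≤ S ⊔ T))
          (fun j => Fin.cases (Submodule.inclusion (le_sup_right : T ≤ S ⊔ T))
            (fun k => k.elim0) j)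
      refine ⟨DirectSum.toModule Λ (Fin 2)
        (↥(S ⊔ T)) comps, ?_⟩
      rintro ⟨z, hz⟩
      obtain ⟨s, hs, t, ht, hst⟩ := Submodule.mem_sup.1 hz
      refine ⟨DirectSum.lof Λ (Fin 2)
          (fun i => ((![ModuleCat.of Λ ↥S, ModuleCat.of Λ ↥T] i : ModuleCat.{u} Λ) : Type u)) 0
          (show ((![ModuleCat.of Λ ↥S, ModuleCat.of Λ ↥T] 0 : ModuleCat.{u} Λ) : Type u)
            from (⟨s, hs⟩ : ↥S))
        + DirectSum.lof Λ (Fin 2)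
          (fun i => ((![ModuleCat.of Λ ↥S, ModuleCat.of Λ ↥T] i : ModuleCat.{u} Λ) : Type u)) 1
          (show ((![ModuleCat.of Λ ↥S, ModuleCat.of Λ ↥T] 1 : ModuleCat.{u} Λ) : Type u)
            from (⟨t, ht⟩ : ↥T)), ?_⟩
      rw [map_add]
      erw [DirectSum.toModule_lof, DirectSum.toModule_lof]
      exact Subtype.ext hst
    · intro S h; rfl
    · intro S T W hST hTW hSW; rfl
    · intro S T hST; rfl
    · intro x
      obtain ⟨S, hx, hS⟩ := h x
      exact ⟨⟨S, hS⟩, ⟨x, hx⟩, rfl⟩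
    · rintro ⟨S, hS⟩ y hy
      refine ⟨⟨S, hS⟩, le_refl _, ?_⟩
      exact Subtype.ext hy

lemma mem_lim_of_mem (U : Set (ModuleCat.{u} Λ)) (M : ModuleCat.{u} Λ) (hM : M ∈ U) :
    M ∈ LimClass Λ U := by
  refine ⟨PUnit, fun _ _ => True, ⟨PUnit.unit⟩, fun _ => trivial,
    fun _ _ _ _ _ => trivial, fun i j => ⟨PUnit.unit, trivial, trivial⟩,
    fun _ => M, fun _ _ _ => LinearMap.id, fun _ => LinearMap.id,
    fun _ => hM, fun _ _ => rfl, fun _ _ _ _ _ _ => rfl, fun _ _ _ => rfl,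
    fun x => ⟨PUnit.unit, x, rfl⟩, fun i y hy => ⟨PUnit.unit, trivial, hy⟩⟩

end limchar

section pure
variable {K Λ : Type u} [Field K] [Ring Λ] [Algebra K Λ]

set_option maxHeartbeats 1000000 in
lemma pure_closed [FiniteDimensional K Λ]
    (U : Set (ModuleCat.{u} Λ)) (hU : IsSmallTorsionClass K Λ U)
    (X : ModuleCat.{u} Λ) (Y : Submodule Λ (X : Type u))
    (hX : X ∈ LimClass Λ U) (hY : IsPureSubmodule Λ Y) :
    ModuleCat.of Λ ↥Y ∈ LimClass Λ U := by
  rw [limclass_iff U hU] at hX ⊢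
  intro y0
  set y : ↥Y := y0 with hy0
  obtain ⟨S, hyS, hSU⟩ := hX (y : (X : Type u))
  have hSfd : FiniteDimensional K (RestrictScalars K Λ ↥S) := hU.1 _ hSU
  obtain ⟨n, w, hw⟩ := exists_kspan (↥S) hSfd
  set s : Fin n → (X : Type u) := fun j => (w j : (X : Type u)) with hs
  obtain ⟨c, hc⟩ := hw ⟨(y : (X : Type u)), hyS⟩
  have hcX : (y : (X : Type u)) = ∑ l, algebraMap K Λ (c l) • s l := by
    have h1 := congrArg (fun z : ↥S => (z : (X : Type u))) hc
    simp only at h1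
    rw [h1, coe_sum_smul S (fun l => algebraMap K Λ (c l)) w]
  set π : (Fin n → Λ) →ₗ[Λ] (X : Type u) := combo s with hπ
  have hrange : ∀ v, π v ∈ S := by
    intro v
    rw [hπ, combo_apply]
    exact Submodule.sum_smul_mem S v (fun j _ => (w j).2)
  set R := LinearMap.ker π with hR
  have hRfd : FiniteDimensional K (RestrictScalars K Λ ↥R) :=
    findim_of_injective R.subtype Subtype.coe_injective
      (findim_pi (findim_lambda (K := K) (Λ := Λ)))
  obtain ⟨m, r, hr⟩ := exists_kspan (↥R) hRfd
  set a : Fin (m + 1) → Fin n → Λ :=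
    Fin.cons (fun l => algebraMap K Λ (c l)) (fun i => ((r i : Fin n → Λ))) with ha
  set yv : Fin (m + 1) → ↥Y := Fin.cons y 0 with hyv
  have hsol : ∃ x : Fin n → (X : Type u), ∀ i, ∑ j, a i j • x j = (yv i : (X : Type u)) := by
    refine ⟨s, fun i => ?_⟩
    refine Fin.cases ?_ ?_ i
    · rw [ha, hyv]
      simp only [Fin.cons_zero]
      exact hcX.symm
    · intro i'
      rw [ha, hyv]
      simp only [Fin.cons_succ]
      have h0 : π ((r i' : Fin n → Λ)) = 0 := LinearMap.mem_ker.1 (hR ▸ (r i').2)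
      rw [hπ, combo_apply] at h0
      rw [h0]
      rfl
  obtain ⟨x', hx'⟩ := hY (m + 1) n a yv hsol
  set T : Submodule Λ ↥Y := Submodule.span Λ (Set.range x') with hT
  have hx'0 : ∑ j, (algebraMap K Λ (c j)) • (x' j : (X : Type u)) = (y : (X : Type u)) := by
    have h1 := hx' 0
    rw [ha, hyv] at h1
    simpa only [Fin.cons_zero] using h1
  have hx'succ : ∀ i : Fin m, ∑ j, ((r i : Fin n → Λ)) j • (x' j : (X : Type u)) = 0 := by
    intro i
    have h1 := hx' i.succ
    rw [ha, hyv] at h1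
    simpa only [Fin.cons_succ, Submodule.coe_zero, Pi.zero_apply] using h1
  have hyT : y ∈ T := by
    have hyc : y = ∑ l, algebraMap K Λ (c l) • x' l := by
      apply Subtype.ext
      rw [coe_sum_smul Y (fun l => algebraMap K Λ (c l)) x']
      exact hx'0.symm
    rw [hyc]
    exact Submodule.sum_smul_mem T _ (fun l _ => Submodule.subset_span ⟨l, rfl⟩)
  have hTU : ModuleCat.of Λ ↥T ∈ U := by
    set π'' : (Fin n → Λ) →ₗ[Λ] ↥S := π.codRestrict S hrange with hπ''
    have hπ''surj : Function.Surjective π'' := by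
      intro z
      obtain ⟨d, hd⟩ := hw z
      refine ⟨fun l => algebraMap K Λ (d l), Subtype.ext ?_⟩
      rw [hπ'', LinearMap.codRestrict_apply, hπ, combo_apply]
      have h1 := congrArg (fun z : ↥S => (z : (X : Type u))) hd
      rw [h1, coe_sum_smul S (fun l => algebraMap K Λ (d l)) w]
    set x'' : Fin n → ↥T := fun j => ⟨x' j, Submodule.subset_span ⟨j, rfl⟩⟩ with hx''
    set ψ : (Fin n → Λ) →ₗ[Λ] ↥T := combo x'' with hψ
    have hcoeψ : ∀ v, (((ψ v : ↥T) : ↥Y) : (X : Type u)) = ∑ j, v j • (x' j : (X : Type u)) := by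
      intro v
      rw [hψ, combo_coe T x'' v, coe_sum_smul Y v (fun j => x' j)]
    have hker : R ≤ LinearMap.ker ψ := by
      intro v hv
      obtain ⟨d, hd⟩ := hr ⟨v, hv⟩
      have hvcoe : v = ∑ i, algebraMap K Λ (d i) • ((r i : Fin n → Λ)) := by
        have h1 := congrArg (fun z : ↥R => (z : Fin n → Λ)) hd
        simp only at h1
        rw [h1, coe_sum_smul R (fun i => algebraMap K Λ (d i)) r]
    -- compute the coercion is zero
      have hzero : (((ψ v : ↥T) : ↥Y) : (X : Type u)) = 0 := by
        rw [hcoeψ, hvcoe]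
        calc ∑ j, ((∑ i, algebraMap K Λ (d i) • ((r i : Fin n → Λ))) j) • (x' j : (X : Type u))
            = ∑ j, ∑ i, algebraMap K Λ (d i) • (((r i : Fin n → Λ)) j • (x' j : (X : Type u))) := by
              refine Finset.sum_congr rfl fun j _ => ?_
              rw [Finset.sum_apply, Finset.sum_smul]
              refine Finset.sum_congr rfl fun i _ => ?_
              rw [Pi.smul_apply, smul_eq_mul, mul_smul]
          _ = ∑ i, ∑ j, algebraMap K Λ (d i) • (((r i : Fin n → Λ)) j • (x' j : (X : Type u))) :=
              Finset.sum_comm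
          _ = ∑ i, algebraMap K Λ (d i) • ∑ j, (((r i : Fin n → Λ)) j • (x' j : (X : Type u))) := by
              refine Finset.sum_congr rfl fun i _ => ?_
              rw [Finset.smul_sum]
          _ = 0 := by
              refine Finset.sum_eq_zero fun i _ => ?_
              rw [hx'succ i, smul_zero]
      rw [LinearMap.mem_ker]
      exact Subtype.ext (Subtype.ext hzero)
    have hψsurj : Function.Surjective ψ := by
      rintro ⟨t, ht⟩
      obtain ⟨cΛ, hcΛ⟩ := (Submodule.mem_span_range_iff_exists_fun Λ).1 ht
      refine ⟨cΛ, Subtype.ext ?_⟩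
      rw [hψ, combo_coe T x'' cΛ]
      exact hcΛ
    have hkerR : LinearMap.ker π'' = R := LinearMap.ker_codRestrict S π hrange
    have hkerle : LinearMap.ker π'' ≤ LinearMap.ker ψ := by rw [hkerR]; exact hker
    set e1 := π''.quotKerEquivOfSurjective hπ''surj with he1
    set ψbar := Submodule.liftQ (LinearMap.ker π'') ψ hkerle with hψbar
    have hψbarsurj : Function.Surjective ψbar := by
      intro t
      obtain ⟨v, hv⟩ := hψsurj t
      exact ⟨Submodule.Quotient.mk v, by rw [hψbar]; rw [Submodule.liftQ_apply]; exact hv⟩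
    refine hU.2.2.2.1 (ModuleCat.of Λ ↥S) (ModuleCat.of Λ ↥T) hSU
      ⟨ψbar ∘ₗ (e1.symm : ↥S →ₗ[Λ] ((Fin n → Λ) ⧸ LinearMap.ker π'')), ?_⟩
    exact hψbarsurj.comp e1.symm.surjective
  exact ⟨T, hyT, hTU⟩

end pure

section genprod
variable {K Λ : Type u} [Field K] [Ring Λ] [Algebra K Λ]

/-- multiplication by a central scalar as a Λ-linear map -/
def smulLin {M : Type u} [AddCommGroup M] [Module Λ M] (k : K) : M →ₗ[Λ] M where
  toFun v := algebraMap K Λ k • v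
  map_add' := smul_add _
  map_smul' a v := by
    simp only [RingHom.id_apply, smul_smul, Algebra.commutes]

@[simp] lemma smulLin_apply {M : Type u} [AddCommGroup M] [Module Λ M] (k : K) (v : M) :
    smulLin (Λ := Λ) k v = algebraMap K Λ k • v := rfl

set_option maxHeartbeats 1000000 in
lemma products_of_gen (U : Set (ModuleCat.{u} Λ)) (hU : IsSmallTorsionClass K Λ U)
    (N : ModuleCat.{u} Λ) (hN : IsFinDimModule K Λ N) (hUN : U = SmallGenClass K Λ N)
    (ι : Type u) (G : ι → ModuleCat.{u} Λ) (hG : ∀ i, G i ∈ LimClass Λ U) :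
    ModuleCat.of Λ (∀ i, (G i : Type u)) ∈ LimClass Λ U := by
  rw [limclass_iff U hU]
  intro x
  obtain ⟨d, wN, hwN⟩ := exists_kspan (K := K) (Λ := Λ) (N : Type u) hN
  have hx : ∀ i, ∃ S : Submodule Λ (G i : Type u),
      x i ∈ S ∧ ModuleCat.of Λ ↥S ∈ U := fun i => (limclass_iff U hU (G i)).1 (hG i) (x i)
  choose S hxS hSU using hx
  rw [hUN] at hSU
  have h2 : ∀ i, ∃ (n : ℕ) (p : (Fin n → (N : Type u)) →ₗ[Λ] ↥(S i)),
      Function.Surjective p := fun i => (hSU i).2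
  choose nn pp hpp using h2
  have h3 : ∀ i, ∃ v : Fin (nn i) → (N : Type u), pp i v = ⟨x i, hxS i⟩ :=
    fun i => hpp i _
  choose v hv using h3
  have h4 : ∀ i (j : Fin (nn i)), ∃ c : Fin d → K,
      v i j = ∑ l, algebraMap K Λ (c l) • wN l := fun i j => hwN (v i j)
  choose cc hcc using h4
  classical
  set q : ∀ i, Fin (nn i) → ((N : Type u) →ₗ[Λ] (G i : Type u)) :=
    fun i j => (S i).subtype ∘ₗ (pp i) ∘ₗ LinearMap.single Λ (fun _ => (N : Type u)) j with hq
  have key1 : ∀ i, x i = ∑ j, q i j (v i j) := by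
    intro i
    have e1 : v i = ∑ j, Pi.single j (v i j) := (Finset.univ_sum_single (v i)).symm
    have e2 : x i = ((pp i) (v i) : (G i : Type u)) := by rw [hv i]
    rw [e2]
    conv_lhs => rw [e1]
    rw [show ((pp i) (∑ j, Pi.single j (v i j)) : (G i : Type u))
        = (S i).subtype ((pp i) (∑ j, Pi.single j (v i j))) from rfl, map_sum, map_sum]
    rfl
  set g' : ∀ i, Fin d → ((N : Type u) →ₗ[Λ] (G i : Type u)) :=
    fun i l => ∑ j, (q i j) ∘ₗ smulLin (Λ := Λ) (cc i j l) with hg'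
  have key2 : ∀ i, ∑ l, g' i l (wN l) = x i := by
    intro i
    calc ∑ l, g' i l (wN l)
        = ∑ l, ∑ j, q i j (algebraMap K Λ (cc i j l) • wN l) := by
          refine Finset.sum_congr rfl fun l _ => ?_
          rw [hg', LinearMap.sum_apply]
          rfl
      _ = ∑ j, ∑ l, q i j (algebraMap K Λ (cc i j l) • wN l) := Finset.sum_comm
      _ = ∑ j, q i j (∑ l, algebraMap K Λ (cc i j l) • wN l) := by
          refine Finset.sum_congr rfl fun j _ => ?_
          rw [map_sum]
      _ = ∑ j, q i j (v i j) := by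
          refine Finset.sum_congr rfl fun j _ => ?_
          rw [← hcc i j]
      _ = x i := (key1 i).symm
  set Gl : Fin d → ((N : Type u) →ₗ[Λ] (∀ i, (G i : Type u))) :=
    fun l => LinearMap.pi (fun i => g' i l) with hGl
  set Θ : (Fin d → (N : Type u)) →ₗ[Λ] (∀ i, (G i : Type u)) :=
    ∑ l, (Gl l) ∘ₗ LinearMap.proj l with hΘ
  have hΘx : Θ wN = x := by
    funext i
    have e1 : Θ wN = ∑ l, Gl l (wN l) := by
      rw [hΘ, LinearMap.sum_apply]
      rfl
    rw [e1, Finset.sum_apply]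
    exact key2 i
  refine ⟨LinearMap.range Θ, ⟨wN, hΘx⟩, ?_⟩
  rw [hUN]
  refine ⟨?_, d, Θ.rangeRestrict, LinearMap.surjective_rangeRestrict Θ⟩
  exact findim_of_surjective Θ.rangeRestrict (LinearMap.surjective_rangeRestrict Θ)
    (findim_pi hN)

end genprod

section gendir
variable {K Λ : Type u} [Field K] [Ring Λ] [Algebra K Λ]

/-- transport a module structure along an additive equivalence -/
def transportModule {V M : Type u} [AddCommGroup V] [AddCommGroup M] [Module Λ M]
    (ε : V ≃+ M) : Module Λ V where
  smul a v := ε.symm (a • ε v)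
  one_smul v := show ε.symm ((1 : Λ) • ε v) = v by simp
  mul_smul a b v := show ε.symm ((a * b) • ε v) = ε.symm (a • ε (ε.symm (b • ε v))) by
    simp [mul_smul]
  smul_zero a := show ε.symm (a • ε 0) = 0 by simp
  smul_add a u v := show ε.symm (a • ε (u + v)) = ε.symm (a • ε u) + ε.symm (a • ε v) by
    simp [smul_add]
  add_smul a b v := show ε.symm ((a + b) • ε v) = ε.symm (a • ε v) + ε.symm (b • ε v) by
    simp [add_smul]
  zero_smul v := show ε.symm ((0 : Λ) • ε v) = 0 by simp

/-- index type of models -/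
def ModelIdx (K Λ : Type u) [Field K] [Ring Λ] [Algebra K Λ] : Type u :=
  Σ n : ℕ, Module Λ (Fin n → K)

def modelMod (K Λ : Type u) [Field K] [Ring Λ] [Algebra K Λ] (e : ModelIdx K Λ) :
    ModuleCat.{u} Λ :=
  @ModuleCat.of Λ _ (Fin e.1 → K) _ e.2

lemma exists_model (M : ModuleCat.{u} Λ) (hM : IsFinDimModule K Λ M) :
    ∃ e : ModelIdx K Λ, Nonempty ((modelMod K Λ e : Type u) ≃ₗ[Λ] (M : Type u)) := by
  have hfd : FiniteDimensional K (RestrictScalars K Λ (M : Type u)) := hM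
  haveI : Module.Finite K (RestrictScalars K Λ (M : Type u)) := hfd
  haveI : Module.Free K (RestrictScalars K Λ (M : Type u)) := Module.Free.of_divisionRing K _
  set n := Module.finrank K (RestrictScalars K Λ (M : Type u))
  set b := Module.finBasis K (RestrictScalars K Λ (M : Type u))
  set ε : (Fin n → K) ≃+ (M : Type u) :=
    (b.equivFun.symm.toAddEquiv.trans (RestrictScalars.addEquiv K Λ (M : Type u)))
    with hε
  refine ⟨⟨n, transportModule ε⟩, ⟨?_⟩⟩
  exact { toFun := ε
          invFun := ε.symm
          map_add' := fun a b => map_add ε a b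
          map_smul' := fun a v => by
            show ε (ε.symm (a • ε v)) = a • ε v
            simp
          left_inv := ε.left_inv
          right_inv := ε.right_inv }

set_option maxHeartbeats 1000000 in
lemma gen_of_products (U : Set (ModuleCat.{u} Λ)) (hU : IsSmallTorsionClass K Λ U)
    (hprod : ∀ (ι : Type u) (G : ι → ModuleCat.{u} Λ), (∀ i, G i ∈ LimClass Λ U) →
      ModuleCat.of Λ (∀ i, (G i : Type u)) ∈ LimClass Λ U) :
    ∃ N : ModuleCat.{u} Λ, IsFinDimModule K Λ N ∧ U = SmallGenClass K Λ N := by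
  classical
  set ι₁ := {e : ModelIdx K Λ // modelMod K Λ e ∈ U} with hι₁
  set κ := Σ e : ι₁, (Fin e.1.1 → K) with hκ
  set Gf : κ → ModuleCat.{u} Λ := fun p => modelMod K Λ p.1.1 with hGf
  have hGfU : ∀ p, Gf p ∈ LimClass Λ U := fun p => mem_lim_of_mem U _ p.1.2
  have hP := hprod κ Gf hGfU
  rw [limclass_iff U hU] at hP
  set x : ∀ p, (Gf p : Type u) := fun p => p.2 with hx
  obtain ⟨S, hxS, hSU⟩ := hP x
  refine ⟨ModuleCat.of Λ ↥S, hU.1 _ hSU, ?_⟩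
  apply Set.Subset.antisymm
  · -- U ⊆ gen S
    intro M hM
    obtain ⟨e, ⟨φ⟩⟩ := exists_model M (hU.1 M hM)
    have heU : modelMod K Λ e ∈ U := hU.2.1 M (modelMod K Λ e) ⟨φ.symm⟩ hM
    set eS : ι₁ := ⟨e, heU⟩ with heS
    obtain ⟨k, mv, hmv⟩ := exists_kspan (K := K) (Λ := Λ) (M : Type u) (hU.1 M hM)
    set ψ : (Fin e.1 → K) → (↥S →ₗ[Λ] (M : Type u)) := fun vv =>
      φ.toLinearMap ∘ₗ
        (LinearMap.proj (R := Λ) (φ := fun p => (Gf p : Type u)) (⟨eS, vv⟩ : κ)) ∘ₗ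
        S.subtype with hψ
    have hψx : ∀ vv, ψ vv ⟨x, hxS⟩ = φ vv := fun vv => rfl
    set xS : ↥S := ⟨x, hxS⟩ with hxSdef
    set Θ : (Fin k → ↥S) →ₗ[Λ] (M : Type u) :=
      ∑ j, (ψ (φ.symm (mv j))) ∘ₗ LinearMap.proj j with hΘ
    have hmem : ∀ j, mv j ∈ LinearMap.range Θ := by
      intro j
      refine ⟨Pi.single j xS, ?_⟩
      have e1 : Θ (Pi.single j xS) = ∑ j', (ψ (φ.symm (mv j'))) ((Pi.single j xS : Fin k → ↥S) j') := by
        rw [hΘ, LinearMap.sum_apply]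
        rfl
      rw [e1, Finset.sum_eq_single_of_mem j (Finset.mem_univ j)]
      · rw [Pi.single_eq_same]
        refine (hψx _).trans ?_
        simp
      · intro j' _ hj'
        rw [Pi.single_eq_of_ne hj', map_zero]
    have hsurj : Function.Surjective Θ := by
      intro m
      obtain ⟨c, hc⟩ := hmv m
      have : m ∈ LinearMap.range Θ := by
        rw [hc]
        exact Submodule.sum_smul_mem _ _ (fun l _ => hmem l)
      obtain ⟨u, hu⟩ := this
      exact ⟨u, hu⟩
    exact ⟨hU.1 M hM, k, Θ, hsurj⟩
  · -- gen S ⊆ U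
    rintro M ⟨hMfd, k, p, hp⟩
    have hsum := hU.2.2.1 k (fun _ => ModuleCat.of Λ ↥S) (fun _ => hSU)
    refine hU.2.2.2.1 _ M hsum
      ⟨p ∘ₗ (DirectSum.linearEquivFunOnFintype Λ (Fin k)
        (fun _ => ↥S)).toLinearMap, ?_⟩
    exact hp.comp (DirectSum.linearEquivFunOnFintype Λ (Fin k) (fun _ => ↥S)).surjective

end gendir

/-- For a torsion class `U` in `mod Λ`, the class `lim U` is closed under pure
submodules, and it is closed under arbitrary products if and only if `U = gen N` for
some finite-dimensional module `N`. -/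
theorem lim_of_small_torsion_class_pure_and_products
    (K : Type u) [Field K] [IsAlgClosed K]
    (Λ : Type u) [Ring Λ] [Algebra K Λ] [FiniteDimensional K Λ]
    (U : Set (ModuleCat.{u} Λ)) (hU : IsSmallTorsionClass K Λ U) :
    (∀ (X : ModuleCat.{u} Λ) (Y : Submodule Λ (X : Type u)),
        X ∈ LimClass Λ U → IsPureSubmodule Λ Y → ModuleCat.of Λ ↥Y ∈ LimClass Λ U) ∧
    ((∀ (ι : Type u) (G : ι → ModuleCat.{u} Λ), (∀ i, G i ∈ LimClass Λ U) →
          ModuleCat.of Λ (∀ i, (G i : Type u)) ∈ LimClass Λ U) ↔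
        ∃ N : ModuleCat.{u} Λ, IsFinDimModule K Λ N ∧ U = SmallGenClass K Λ N) := by
  refine ⟨fun X Y hX hY => pure_closed U hU X Y hX hY, ?_, ?_⟩
  · exact gen_of_products U hU
  · rintro ⟨N, hN, hUN⟩ ι G hG
    exact products_of_gen U hU N hN hUN ι G hG
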